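/- Let α = (√5 - 1)/2, g(x) = log(2 - 2cos(2πx)) and S_k(α) = ∑_{j=1}^{k} g(jα). Then lim_{k→∞} S_k(α)/k = 0. -/

import Mathlib

open Real Finset Filter Topology

noncomputable def nd (x : ℝ) : ℝ := |x - round x|

lemma nd_nonneg (x : ℝ) : 0 ≤ nd x := abs_nonneg _

lemma nd_le (x : ℝ) (n : ℤ) : nd x ≤ |x - n| := by
  by_cases h : n = round x
  · simp [nd, h]
  · have h1 : (1:ℝ) ≤ |(n:ℝ) - round x| := by
      rw [← Int.cast_sub, ← Int.cast_abs]
      exact_mod_cast Int.one_le_abs (sub_ne_zero.2 h)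
    have h2 : |x - round x| ≤ 1/2 := abs_sub_round x
    have h3 : |(n:ℝ) - round x| ≤ |x - n| + |x - round x| := by
      calc |(n:ℝ) - round x| = |(x - round x) - (x - n)| := by ring_nf
        _ ≤ |x - round x| + |x - n| := abs_sub _ _
        _ = |x - n| + |x - round x| := by ring
    unfold nd; linarith

lemma golden_sq {α : ℝ} (hα : α = (Real.sqrt 5 - 1) / 2) : α ^ 2 + α = 1 := by
  have h5 : Real.sqrt 5 ^ 2 = 5 := Real.sq_sqrt (by norm_num)
  rw [hα]; nlinarith [h5]

lemma golden_bounds {α : ℝ} (hα : α = (Real.sqrt 5 - 1) / 2) : 1/2 < α ∧ α < 1 := by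
  have h5 : Real.sqrt 5 ^ 2 = 5 := Real.sq_sqrt (by norm_num)
  have h0 : 0 ≤ Real.sqrt 5 := Real.sqrt_nonneg 5
  constructor <;> rw [hα] <;> nlinarith

/-- Diophantine property of the golden mean. -/
lemma golden_dioph {α : ℝ} (hα : α = (Real.sqrt 5 - 1) / 2) (m : ℕ) (hm : 1 ≤ m) :
    1 / (4 * m) ≤ nd (m * α) := by
  have hm1 : (1:ℝ) ≤ m := by exact_mod_cast hm
  set p : ℤ := round ((m:ℝ) * α) with hp
  have hsq := golden_sq hα
  obtain ⟨ha1, ha2⟩ := golden_bounds hα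
  have key : ((m:ℝ) * α - p) * ((m:ℝ) * α + p + m) = (m:ℝ)^2 - p^2 - p*m := by
    linear_combination (m:ℝ)^2 * hsq
  have hne : (m:ℤ)^2 - p^2 - p*m ≠ 0 := by
    intro h0
    have h5irr : Irrational (Real.sqrt 5) := (Nat.prime_five).irrational_sqrt
    have hsq5 : ((2*p+m : ℤ):ℝ)^2 = 5 * (m:ℝ)^2 := by
      have : ((2*p+m)^2 : ℤ) = 5 * m^2 := by nlinarith [h0]
      exact_mod_cast congrArg (fun z : ℤ => (z:ℝ)) this
    have hmpos : (0:ℝ) < m := by positivity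
    have : Real.sqrt 5 = |((2*p+m : ℤ):ℝ)| / m := by
      rw [← Real.sqrt_sq_eq_abs]
      rw [show ((2*p+m : ℤ):ℝ)^2 = 5 * (m:ℝ)^2 from hsq5]
      rw [Real.sqrt_mul (by norm_num), Real.sqrt_sq hmpos.le]
      field_simp
    apply h5irr
    exact ⟨|(2*p+m : ℚ)| / m, by push_cast [this]; norm_num⟩
  have habs1 : (1:ℝ) ≤ |(m:ℝ)^2 - p^2 - p*m| := by
    have : (1:ℤ) ≤ |(m:ℤ)^2 - p^2 - p*m| := Int.one_le_abs hne
    calc (1:ℝ) ≤ |((m:ℤ)^2 - p^2 - p*m : ℤ)| := by exact_mod_cast this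
      _ = |(m:ℝ)^2 - p^2 - p*m| := by push_cast; ring_nf
  have hround : |(m:ℝ)*α - p| ≤ 1/2 := abs_sub_round _
  have hcof : |(m:ℝ)*α + p + m| ≤ 4 * m := by
    have h1 : (m:ℝ)*α - 1/2 ≤ p := by linarith [(abs_le.1 hround).2]
    have h2 : (p:ℝ) ≤ m*α + 1/2 := by linarith [(abs_le.1 hround).1]
    have hma : (m:ℝ) * (1/2) ≤ (m:ℝ) * α := by nlinarith
    rw [abs_of_nonneg (by nlinarith)]
    nlinarith
  have hnd : nd ((m:ℝ)*α) = |(m:ℝ)*α - p| := rfl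
  rw [hnd]
  have h4m : (0:ℝ) < 4*m := by positivity
  have hprod : 1 ≤ |(m:ℝ)*α - p| * (4*m) := by
    have hnn : 0 ≤ |(m:ℝ)*α - p| := abs_nonneg _
    calc (1:ℝ) ≤ |(m:ℝ)^2 - p^2 - p*m| := habs1
      _ = |(m:ℝ)*α - p| * |(m:ℝ)*α + p + m| := by rw [← abs_mul, key]
      _ ≤ |(m:ℝ)*α - p| * (4*m) := mul_le_mul_of_nonneg_left hcof hnn
  rw [div_le_iff₀ h4m]
  linarith

lemma abs_one_sub_exp_sq (θ : ℝ) :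
    ‖1 - Complex.exp ((θ:ℂ) * Complex.I)‖ ^ 2 = 2 - 2 * Real.cos θ := by
  rw [Complex.sq_norm, Complex.normSq_apply]
  simp only [Complex.sub_re, Complex.sub_im, Complex.one_re, Complex.one_im,
    Complex.exp_ofReal_mul_I_re, Complex.exp_ofReal_mul_I_im]
  nlinarith [Real.sin_sq_add_cos_sq θ]

lemma abs_one_sub_exp (x : ℝ) :
    ‖1 - Complex.exp (((2 * π * x : ℝ) : ℂ) * Complex.I)‖ = 2 * |Real.sin (π * x)| := by
  have h1 := abs_one_sub_exp_sq (2 * π * x)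
  have h2 : Real.cos (2 * π * x) = 1 - 2 * Real.sin (π * x) ^ 2 := by
    have hc := Real.cos_sq (π * x)
    have hs := Real.sin_sq_add_cos_sq (π * x)
    have h4 : 2 * (π * x) = 2 * π * x := by ring
    rw [h4] at hc
    nlinarith
  have h5 : ‖1 - Complex.exp (((2 * π * x : ℝ) : ℂ) * Complex.I)‖ ^ 2
      = (2 * |Real.sin (π * x)|) ^ 2 := by
    rw [h1, h2, mul_pow, sq_abs]; ring
  have h6 : (0:ℝ) ≤ ‖1 - Complex.exp (((2 * π * x : ℝ) : ℂ) * Complex.I)‖ := by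
    positivity
  have h7 : (0:ℝ) ≤ 2 * |Real.sin (π * x)| := by positivity
  nlinarith [h5, h6, h7]

lemma abs_sin_pi (x : ℝ) : 2 * nd x ≤ |Real.sin (π * x)| := by
  set n := round x with hn
  have ht : |Real.sin (π * x)| = |Real.sin (π * (x - n))| := by
    have h0 : π * x = π * (x - n) + n * π := by ring
    rw [h0, Real.sin_add_int_mul_pi, abs_mul]
    have h1 : |((-1:ℝ))^n| = 1 := by
      rcases Int.even_or_odd n with he | ho
      · rw [he.neg_one_zpow]; simp
      · rw [Odd.neg_one_zpow ho]; simp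
    rw [h1, one_mul]
  rw [ht]
  set t := x - (n:ℝ) with htdef
  have h12 : |t| ≤ 1/2 := abs_sub_round x
  have h12' := abs_le.1 h12
  have habs : |Real.sin (π * t)| = Real.sin (π * |t|) := by
    rcases le_or_gt 0 t with h | h
    · rw [abs_of_nonneg h, abs_of_nonneg]
      apply Real.sin_nonneg_of_nonneg_of_le_pi (by positivity)
      nlinarith [Real.pi_pos, h12'.2]
    · have hsin : Real.sin (π * t) ≤ 0 := by
        apply Real.sin_nonpos_of_nonpos_of_neg_pi_le
        · nlinarith [Real.pi_pos]
        · nlinarith [Real.pi_pos, h12'.1]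
      rw [abs_of_neg h, show π * -t = -(π*t) by ring, Real.sin_neg, abs_of_nonpos hsin]
  rw [habs]
  have hmain := Real.mul_le_sin (x := π * |t|) (by positivity)
    (by nlinarith [Real.pi_pos, h12, abs_nonneg t])
  have hnd : nd x = |t| := rfl
  calc 2 * nd x = 2 * |t| := by rw [hnd]
    _ = 2 / π * (π * |t|) := by field_simp
    _ ≤ Real.sin (π * |t|) := hmain

lemma four_nd_le (x : ℝ) :
    4 * nd x ≤ ‖1 - Complex.exp (((2 * π * x : ℝ) : ℂ) * Complex.I)‖ := by
  rw [abs_one_sub_exp]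
  linarith [abs_sin_pi x]

lemma g_eq_log_abs (x : ℝ) :
    Real.log (2 - 2 * Real.cos (2 * π * x))
      = 2 * Real.log (‖1 - Complex.exp (((2 * π * x : ℝ) : ℂ) * Complex.I)‖) := by
  rw [← abs_one_sub_exp_sq (2 * π * x), Real.log_pow]
  norm_num

lemma geom_Ioc (z : ℂ) (hz : ‖z‖ = 1) (hz1 : z ≠ 1) (M n : ℕ) :
    ‖∑ m ∈ Finset.Ioc M n, z ^ m‖ ≤ 2 / ‖1 - z‖ := by
  have habs : 0 < ‖1 - z‖ := by
    rw [norm_pos_iff]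
    intro h
    exact hz1 (by linear_combination -h)
  rcases le_or_gt n M with h | h
  · rw [Finset.Ioc_eq_empty (by omega)]
    simp
    positivity
  · have heq : Finset.Ioc M n = Finset.Ico (M+1) (n+1) := by
      rw [← Finset.Icc_add_one_left_eq_Ioc, Finset.Ico_add_one_right_eq_Icc]
    rw [heq, geom_sum_Ico hz1 (by omega), norm_div]
    have h1 : ‖z ^ (n+1) - z ^ (M+1)‖ ≤ 2 := by
      calc ‖z ^ (n+1) - z ^ (M+1)‖ ≤ ‖z ^ (n+1)‖ + ‖z ^ (M+1)‖ := norm_sub_le _ _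
        _ = 2 := by
          simp only [norm_pow, hz]; norm_num
    have h2 : ‖z - 1‖ = ‖1 - z‖ := by
      rw [← norm_neg]
      ring_nf
    rw [h2]
    gcongr

lemma abel_bound (z : ℂ) (hz : ‖z‖ = 1) (hz1 : z ≠ 1) (r : ℝ)
    (hr0 : 0 ≤ r) (hr1 : r ≤ 1) (M N : ℕ) :
    ‖∑ m ∈ Finset.Ioc M N, ((r:ℂ) * z) ^ m / m‖ ≤ 2 / ((M + 1) * ‖1 - z‖) := by
  have habs : 0 < ‖1 - z‖ := by
    rw [norm_pos_iff]
    intro h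
    exact hz1 (by linear_combination -h)
  set B : ℝ := 2 / ‖1 - z‖ with hB
  have hBpos : 0 < B := by positivity
  have hA : ∀ n : ℕ, ‖∑ m ∈ Finset.Ioc M n, z ^ m‖ ≤ B := fun n => geom_Ioc z hz hz1 M n
  set b : ℕ → ℝ := fun m => r ^ m / m with hb
  have hbnn : ∀ m, 0 ≤ b m := fun m => by positivity
  have hbmono : ∀ m : ℕ, 1 ≤ m → b (m+1) ≤ b m := by
    intro m hm
    have h1 : r ^ (m+1) ≤ r ^ m := by
      rw [pow_succ]
      nlinarith [pow_nonneg hr0 m]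
    have hm0 : (0:ℝ) < m := by exact_mod_cast hm
    rw [hb]
    simp only
    rw [div_le_div_iff₀ (by positivity) hm0]
    push_cast
    nlinarith [pow_nonneg hr0 (m+1)]
  have hterm : ∀ m : ℕ, ((r:ℂ) * z) ^ m / m = ((b m : ℝ) : ℂ) * z ^ m := by
    intro m
    rw [hb]
    simp only
    push_cast
    rw [mul_pow]
    ring
  set T : ℕ → ℂ := fun n => ∑ m ∈ Finset.Ioc M n, ((r:ℂ) * z) ^ m / m with hT
  set A : ℕ → ℂ := fun n => ∑ m ∈ Finset.Ioc M n, z ^ m with hAdef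
  have key : ∀ d : ℕ, ‖T (M+1+d) - ((b (M+1+d) : ℝ) : ℂ) * A (M+1+d)‖
      ≤ B * (b (M+1) - b (M+1+d)) := by
    intro d
    induction d with
    | zero =>
      have h1 : Finset.Ioc M (M+1) = {M+1} := by ext a; simp
      simp only [hT, hAdef, h1, Finset.sum_singleton, hterm]
      simp [mul_comm]
    | succ d ih =>
      have hst : M + 1 + (d+1) = (M+1+d) + 1 := by ring
      rw [hst]
      set n := M + 1 + d with hn
      have hTn : T (n+1) = T n + ((r:ℂ) * z) ^ (n+1) / ((n+1 : ℕ) : ℂ) :=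
        Finset.sum_Ioc_succ_top (by omega) _
      have hAn : A (n+1) = A n + z ^ (n+1) :=
        Finset.sum_Ioc_succ_top (by omega) _
      have heq : T (n+1) - ((b (n+1) : ℝ) : ℂ) * A (n+1)
          = (T n - ((b n : ℝ) : ℂ) * A n) + ((b n - b (n+1) : ℝ) : ℂ) * A n := by
        rw [hTn, hAn, hterm (n+1)]
        push_cast
        ring
      rw [heq]
      calc ‖(T n - ((b n : ℝ) : ℂ) * A n) + ((b n - b (n+1) : ℝ) : ℂ) * A n‖
          ≤ ‖T n - ((b n : ℝ) : ℂ) * A n‖ + ‖((b n - b (n+1) : ℝ) : ℂ) * A n‖ :=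
            norm_add_le _ _
        _ ≤ B * (b (M+1) - b n) + (b n - b (n+1)) * B := by
            apply add_le_add ih
            rw [norm_mul, Complex.norm_real, Real.norm_eq_abs,
              abs_of_nonneg (by linarith [hbmono n (by omega)])]
            apply mul_le_mul_of_nonneg_left (hA n)
            linarith [hbmono n (by omega)]
        _ = B * (b (M+1) - b (n+1)) := by ring
  have hTb : ∀ N, ‖T N‖ ≤ B * b (M+1) := by
    intro N
    rcases le_or_gt N M with h | h
    · have : T N = 0 := by
        simp [hT, Finset.Ioc_eq_empty (by omega : ¬ M < N)]
      rw [this, norm_zero]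
      positivity
    · obtain ⟨d, rfl⟩ : ∃ d, N = M + 1 + d := ⟨N - (M+1), by omega⟩
      calc ‖T (M+1+d)‖
          ≤ ‖T (M+1+d) - ((b (M+1+d) : ℝ) : ℂ) * A (M+1+d)‖
            + ‖((b (M+1+d) : ℝ) : ℂ) * A (M+1+d)‖ := by
            simpa using norm_add_le (T (M+1+d) - ((b (M+1+d) : ℝ) : ℂ) * A (M+1+d))
              (((b (M+1+d) : ℝ) : ℂ) * A (M+1+d))
        _ ≤ B * (b (M+1) - b (M+1+d)) + b (M+1+d) * B := by
            apply add_le_add (key d)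
            rw [norm_mul, Complex.norm_real, Real.norm_eq_abs,
              abs_of_nonneg (hbnn _)]
            exact mul_le_mul_of_nonneg_left (hA _) (hbnn _)
        _ = B * b (M+1) := by ring
  calc ‖T N‖ ≤ B * b (M+1) := hTb N
    _ ≤ 2 / ((M + 1) * ‖1 - z‖) := by
      have hbval : b (M+1) = r ^ (M+1) / ((M:ℝ) + 1) := by
        show r ^ (M+1) / ((M+1 : ℕ) : ℝ) = _
        push_cast; ring
      rw [hB, hbval]
      have h1 : r ^ (M+1) ≤ 1 := pow_le_one₀ hr0 hr1
      have h2 : (0:ℝ) < (M:ℝ) + 1 := by positivity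
      calc 2 / ‖1 - z‖ * (r ^ (M+1) / ((M:ℝ) + 1))
          ≤ 2 / ‖1 - z‖ * (1 / ((M:ℝ) + 1)) := by gcongr
        _ = 2 / (((M:ℝ) + 1) * ‖1 - z‖) := by
            rw [div_mul_div_comm, mul_one, mul_comm]

lemma keyF (z : ℂ) (hz : ‖z‖ = 1) (hz1 : z ≠ 1) (M : ℕ) :
    |Real.log (‖1 - z‖) + (∑ m ∈ Finset.Icc 1 M, z ^ m / m).re|
      ≤ 2 / ((M + 1) * ‖1 - z‖) := by
  have habs : 0 < ‖1 - z‖ := by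
    rw [norm_pos_iff]
    intro h; exact hz1 (by linear_combination -h)
  set C : ℝ := 2 / ((M + 1) * ‖1 - z‖) with hC
  set φ : ℝ → ℝ := fun r =>
    Real.log (‖1 - (r:ℂ) * z‖) + (∑ m ∈ Finset.Icc 1 M, ((r:ℂ) * z) ^ m / m).re
    with hφ
  have hbound : ∀ r : ℝ, 0 < r → r < 1 → |φ r| ≤ C := by
    intro r hr0 hr1
    have hrz : ‖(r:ℂ) * z‖ < 1 := by
      rw [norm_mul, Complex.norm_real, Real.norm_eq_abs, abs_of_pos hr0,
        hz, mul_one]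
      exact hr1
    have hsum := Complex.hasSum_taylorSeries_neg_log hrz
    set f : ℕ → ℂ := fun n => ((r:ℂ) * z) ^ n / n with hf
    set Sv : ℂ := -Complex.log (1 - (r:ℂ) * z) with hS
    set P : ℂ := ∑ m ∈ Finset.range (M+1), f m with hP
    have htend : Tendsto (fun N => ∑ m ∈ Finset.range (N+1), f m - P) atTop (𝓝 (Sv - P)) :=
      ((hsum.tendsto_sum_nat.comp (tendsto_add_atTop_nat 1)).sub tendsto_const_nhds)
    have hpsi : ∀ N : ℕ, M ≤ N →
        ∑ m ∈ Finset.range (N+1), f m - P = ∑ m ∈ Finset.Ioc M N, f m := by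
      intro N h
      have hIoc : Finset.Ioc M N = Finset.Ico (M+1) (N+1) := by
        rw [← Finset.Icc_add_one_left_eq_Ioc, Finset.Ico_add_one_right_eq_Icc]
      rw [hIoc, Finset.sum_Ico_eq_sub f (by omega : M+1 ≤ N+1), hP]
    have hnorm : ‖Sv - P‖ ≤ C := by
      apply le_of_tendsto htend.norm
      filter_upwards [eventually_ge_atTop M] with N hN
      rw [hpsi N hN]
      exact abel_bound z hz hz1 r hr0.le hr1.le M N
    have hlog : Complex.log (1 - (r:ℂ) * z) = -Sv := by rw [hS, neg_neg]
    have hre : φ r = (Complex.log (1 - (r:ℂ) * z) + P).re := by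
      rw [Complex.add_re, Complex.log_re, hP, hφ]
      simp only
      congr 2
      rw [eq_comm]
      have h0 : Finset.range (M+1) = insert 0 (Finset.Icc 1 M) := by
        ext a
        simp [Nat.lt_succ_iff]
        omega
      rw [h0, Finset.sum_insert (by simp)]
      simp [hf]
    rw [hre]
    calc |(Complex.log (1 - (r:ℂ) * z) + P).re| ≤ ‖Complex.log (1 - (r:ℂ) * z) + P‖ :=
          Complex.abs_re_le_norm _
      _ = ‖Sv - P‖ := by
          rw [hlog, ← norm_neg]
          congr 1
          ring
      _ ≤ C := hnorm
  have hcont : ContinuousAt φ 1 := by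
    apply ContinuousAt.add
    · apply ContinuousAt.log
      · exact (continuous_norm.comp
          (continuous_const.sub (Complex.continuous_ofReal.mul continuous_const))).continuousAt
      · simp only [Complex.ofReal_one, one_mul]
        exact habs.ne'
    · apply Continuous.continuousAt
      apply Complex.continuous_re.comp
      apply continuous_finset_sum
      intro m _
      exact ((Complex.continuous_ofReal.mul continuous_const).pow m).div_const _
  have hlt : Tendsto φ (nhdsWithin 1 (Set.Iio 1)) (𝓝 (φ 1)) :=
    (hcont.continuousWithinAt).tendsto
  have hev : ∀ᶠ r in nhdsWithin 1 (Set.Iio (1:ℝ)), |φ r| ≤ C := by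
    filter_upwards [Ioo_mem_nhdsLT_of_mem (Set.mem_Ioc.2 ⟨zero_lt_one, le_refl 1⟩)] with r hr
    exact hbound r hr.1 hr.2
  have hfinal : |φ 1| ≤ C := le_of_tendsto (hlt.abs) hev
  have hval : φ 1 = Real.log (‖1 - z‖) + (∑ m ∈ Finset.Icc 1 M, z ^ m / m).re := by
    rw [hφ]
    simp only [Complex.ofReal_one, one_mul]
  rwa [hval] at hfinal

lemma abs_sub_of_same_sign {a b : ℝ} (h : 0 ≤ a * b) : |a - b| = |(|a| - |b|)| := by
  rcases abs_cases a with ⟨h1, h2⟩ | ⟨h1, h2⟩ <;>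
    rcases abs_cases b with ⟨h3, h4⟩ | ⟨h3, h4⟩ <;>
    rcases abs_cases (a - b) with ⟨h5, h6⟩ | ⟨h5, h6⟩ <;>
    rcases abs_cases (|a| - |b|) with ⟨h7, h8⟩ | ⟨h7, h8⟩ <;>
    nlinarith [h]

lemma abs_add_of_opp_sign {a b : ℝ} (h : a * b < 0) : |a + b| = |(|a| - |b|)| := by
  rcases abs_cases a with ⟨h1, h2⟩ | ⟨h1, h2⟩ <;>
    rcases abs_cases b with ⟨h3, h4⟩ | ⟨h3, h4⟩ <;>
    rcases abs_cases (a + b) with ⟨h5, h6⟩ | ⟨h5, h6⟩ <;>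
    rcases abs_cases (|a| - |b|) with ⟨h7, h8⟩ | ⟨h7, h8⟩ <;>
    nlinarith [h]

section dioph
variable {α : ℝ}

lemma sep_aux (hd : ∀ m : ℕ, 1 ≤ m → 1 / (4 * m) ≤ nd (m * α)) {k : ℕ}
    {i j : ℕ} (hi1 : 1 ≤ i) (hi2 : i ≤ k) (hj1 : 1 ≤ j) (hj2 : j ≤ k) (h : j < i) :
    1 / (8 * k) ≤ |nd (i * α) - nd (j * α)| := by
  set p := round ((i:ℝ) * α) with hp
  set q := round ((j:ℝ) * α) with hq
  set a := (i:ℝ) * α - p with ha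
  set b := (j:ℝ) * α - q with hb
  have hndi : nd ((i:ℝ) * α) = |a| := rfl
  have hndj : nd ((j:ℝ) * α) = |b| := rfl
  have hk1 : (1:ℝ) ≤ k := by exact_mod_cast hi2.trans' hi1
  rcases le_or_gt 0 (a * b) with hab | hab
  · set d : ℕ := i - j with hdd
    have hd1 : 1 ≤ d := by omega
    have hdk : d ≤ k := by omega
    have hcast : ((d:ℕ):ℝ) = (i:ℝ) - j := by
      rw [hdd]; push_cast [Nat.cast_sub h.le]; ring
    have h1 : nd ((d:ℝ) * α) ≤ |a - b| := by
      calc nd ((d:ℝ) * α) ≤ |(d:ℝ) * α - ((p - q : ℤ) : ℝ)| := nd_le _ _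
        _ = |a - b| := by rw [hcast]; push_cast; rw [ha, hb]; ring_nf
    have h2 : 1 / (4 * d) ≤ nd ((d:ℝ) * α) := hd d hd1
    have h3 : (1:ℝ) / (8 * k) ≤ 1 / (4 * d) := by
      have hd' : (1:ℝ) ≤ d := by exact_mod_cast hd1
      have hdk' : (d:ℝ) ≤ k := by exact_mod_cast hdk
      apply one_div_le_one_div_of_le <;> linarith
    rw [hndi, hndj, ← abs_sub_of_same_sign hab]
    linarith
  · set s : ℕ := i + j with hss
    have hs1 : 1 ≤ s := by omega
    have hsk : s ≤ 2 * k := by omega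
    have hcast : ((s:ℕ):ℝ) = (i:ℝ) + j := by push_cast [hss]; ring
    have h1 : nd ((s:ℝ) * α) ≤ |a + b| := by
      calc nd ((s:ℝ) * α) ≤ |(s:ℝ) * α - ((p + q : ℤ) : ℝ)| := nd_le _ _
        _ = |a + b| := by rw [hcast]; push_cast; rw [ha, hb]; ring_nf
    have h2 : 1 / (4 * s) ≤ nd ((s:ℝ) * α) := hd s hs1
    have h3 : (1:ℝ) / (8 * k) ≤ 1 / (4 * s) := by
      have hsk' : (s:ℝ) ≤ 2 * k := by exact_mod_cast hsk
      have hs' : (1:ℝ) ≤ s := by exact_mod_cast hs1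
      apply one_div_le_one_div_of_le <;> linarith
    rw [hndi, hndj, ← abs_add_of_opp_sign hab]
    linarith

lemma sep (hd : ∀ m : ℕ, 1 ≤ m → 1 / (4 * m) ≤ nd (m * α)) {k : ℕ}
    {i j : ℕ} (hi : i ∈ Finset.Icc 1 k) (hj : j ∈ Finset.Icc 1 k) (hij : i ≠ j) :
    1 / (8 * k) ≤ |nd (i * α) - nd (j * α)| := by
  simp only [Finset.mem_Icc] at hi hj
  rcases lt_or_gt_of_ne hij with h | h
  · rw [abs_sub_comm]
    exact sep_aux hd hj.1 hj.2 hi.1 hi.2 h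
  · exact sep_aux hd hi.1 hi.2 hj.1 hj.2 h

end dioph

lemma sum_inv_distinct : ∀ (n : ℕ) (J : Finset ℕ), J.card = n → 0 ∉ J →
    ∑ i ∈ J, (1 / i : ℝ) ≤ ∑ i ∈ Finset.Icc 1 n, (1 / i : ℝ) := by
  intro n
  induction n with
  | zero => intro J hJ _; rw [Finset.card_eq_zero.1 hJ]; simp
  | succ n ih =>
    intro J hJ h0
    have hne : J.Nonempty := Finset.card_pos.1 (by omega)
    set m := J.max' hne with hm
    have hmJ : m ∈ J := J.max'_mem hne
    have hm1 : 1 ≤ m := by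
      rcases Nat.eq_zero_or_pos m with h | h
      · exact absurd (h ▸ hmJ) h0
      · exact h
    have hcard : J.card ≤ m := by
      have hsub : J ⊆ Finset.Icc 1 m := by
        intro x hx
        simp only [Finset.mem_Icc]
        constructor
        · rcases Nat.eq_zero_or_pos x with h | h
          · exact absurd (h ▸ hx) h0
          · exact h
        · exact J.le_max' x hx
      calc J.card ≤ (Finset.Icc 1 m).card := Finset.card_le_card hsub
        _ = m := by rw [Nat.card_Icc]; omega
    have herase : (J.erase m).card = n := by
      rw [Finset.card_erase_of_mem hmJ, hJ]; omega
    have h0' : 0 ∉ J.erase m := fun h => h0 (Finset.mem_of_mem_erase h)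
    have hstep := ih (J.erase m) herase h0'
    have hsum : ∑ i ∈ J, (1 / i : ℝ) = ∑ i ∈ J.erase m, (1 / i : ℝ) + 1 / m := by
      rw [Finset.sum_erase_add J _ hmJ]
    have hlast : (1 / m : ℝ) ≤ 1 / (n + 1) := by
      apply one_div_le_one_div_of_le
      · positivity
      · exact_mod_cast hJ ▸ hcard
    have hIcc : Finset.Icc 1 (n+1) = insert (n+1) (Finset.Icc 1 n) := by
      ext a; simp [Finset.mem_Icc, Finset.mem_insert]; omega
    rw [hsum, hIcc, Finset.sum_insert (by simp)]
    push_cast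
    linarith

lemma harmonic_le (k : ℕ) : ∑ i ∈ Finset.Icc 1 k, (1 / i : ℝ) ≤ 1 + Real.log k := by
  induction k with
  | zero => simp
  | succ k ih =>
    rcases Nat.eq_zero_or_pos k with rfl | hk
    · simp
    have hk' : (0:ℝ) < k := by exact_mod_cast hk
    have hIcc : Finset.Icc 1 (k+1) = insert (k+1) (Finset.Icc 1 k) := by
      ext a; simp [Finset.mem_Icc, Finset.mem_insert]; omega
    rw [hIcc, Finset.sum_insert (by simp)]
    have hlog : Real.log k + 1 / (k+1) ≤ Real.log (k+1) := by
      have h1 : Real.log ((k:ℝ) / (k+1)) ≤ (k:ℝ)/(k+1) - 1 :=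
        Real.log_le_sub_one_of_pos (by positivity)
      rw [Real.log_div hk'.ne' (by positivity)] at h1
      have h2 : (k:ℝ)/(k+1) - 1 = -(1/(k+1)) := by field_simp; ring
      rw [h2] at h1
      linarith
    push_cast
    push_cast at ih
    linarith

lemma recip_sum {α : ℝ} (hd : ∀ m : ℕ, 1 ≤ m → 1 / (4 * m) ≤ nd (m * α)) {k : ℕ} (hk : 1 ≤ k) :
    ∑ j ∈ Finset.Icc 1 k, 1 / nd (j * α) ≤ 8 * k * (1 + Real.log k) := by
  have hkR : (1:ℝ) ≤ k := by exact_mod_cast hk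
  have hndpos : ∀ j : ℕ, j ∈ Finset.Icc 1 k → 0 < nd (j * α) := by
    intro j hj
    simp only [Finset.mem_Icc] at hj
    have := hd j hj.1
    have hj' : (1:ℝ) ≤ j := by exact_mod_cast hj.1
    have : (0:ℝ) < 1 / (4 * j) := by positivity
    linarith [hd j hj.1]
  set F : ℕ → ℕ := fun j => ⌊nd (j * α) * (8 * k)⌋₊ with hF
  have hFle : ∀ j : ℕ, (F j : ℝ) ≤ nd (j * α) * (8 * k) := by
    intro j
    apply Nat.floor_le
    exact mul_nonneg (nd_nonneg _) (by positivity)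
  have hF1 : ∀ j ∈ Finset.Icc 1 k, 1 ≤ F j := by
    intro j hj
    simp only [Finset.mem_Icc] at hj
    have hj' : (1:ℝ) ≤ j := by exact_mod_cast hj.1
    have hjk : (j:ℝ) ≤ k := by exact_mod_cast hj.2
    apply Nat.le_floor
    have h1 : 1 / (4 * (j:ℝ)) ≤ nd (j * α) := hd j hj.1
    have h2 : 1 / (4 * (k:ℝ)) ≤ 1 / (4 * j) := by
      apply one_div_le_one_div_of_le <;> linarith
    have : (1:ℝ) ≤ (1 / (4 * k)) * (8 * k) := by
      rw [div_mul_eq_mul_div, le_div_iff₀ (by linarith)]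
      linarith
    calc ((1:ℕ):ℝ) = 1 := by norm_num
      _ ≤ (1 / (4 * (k:ℝ))) * (8 * k) := this
      _ ≤ nd (j * α) * (8 * k) := by
          apply mul_le_mul_of_nonneg_right (le_trans h2 h1)
          positivity
  have hinj : ∀ i ∈ Finset.Icc 1 k, ∀ j ∈ Finset.Icc 1 k, F i = F j → i = j := by
    intro i hi j hj hFij
    by_contra hij
    have hs := sep hd hi hj hij
    have hflo : |nd (i * α) * (8 * k) - nd (j * α) * (8 * k)| < 1 := by
      have h1 : (F i : ℝ) ≤ nd (i * α) * (8 * k) := hFle i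
      have h2 : nd (i * α) * (8 * k) < F i + 1 := Nat.lt_floor_add_one _
      have h3 : (F j : ℝ) ≤ nd (j * α) * (8 * k) := hFle j
      have h4 : nd (j * α) * (8 * k) < F j + 1 := Nat.lt_floor_add_one _
      rw [hFij] at h1 h2
      rw [abs_lt]
      constructor <;> linarith
    have : |nd (i * α) - nd (j * α)| * (8 * k) < 1 := by
      rw [← abs_of_nonneg (show (0:ℝ) ≤ 8 * k by positivity), ← abs_mul]
      calc |(nd (i * α) - nd (j * α)) * (8 * k)|
          = |nd (i * α) * (8 * k) - nd (j * α) * (8 * k)| := by ring_nf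
        _ < 1 := hflo
    have h8k : (0:ℝ) < 8 * k := by positivity
    have hone : 1 / (8 * (k:ℝ)) * (8 * k) = 1 := by field_simp
    nlinarith [hs, h8k]
  have hterm : ∀ j ∈ Finset.Icc 1 k, 1 / nd (j * α) ≤ 8 * k * (1 / F j) := by
    intro j hj
    have hFpos : (0:ℝ) < F j := by exact_mod_cast hF1 j hj
    have hnd := hndpos j hj
    rw [mul_one_div, div_le_div_iff₀ hnd hFpos, one_mul]
    calc ((F j) : ℝ) ≤ nd (j * α) * (8 * k) := hFle j
      _ = 8 * k * nd (j * α) := by ring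
  have hsum1 : ∑ j ∈ Finset.Icc 1 k, 1 / nd (j * α)
      ≤ 8 * k * ∑ j ∈ Finset.Icc 1 k, (1 / (F j) : ℝ) := by
    rw [Finset.mul_sum]
    exact Finset.sum_le_sum hterm
  set J : Finset ℕ := (Finset.Icc 1 k).image F with hJ
  have hinj' : Set.InjOn F (Finset.Icc 1 k) := fun a ha b hb hab =>
    hinj a (by simpa using ha) b (by simpa using hb) hab
  have hsum2 : ∑ j ∈ Finset.Icc 1 k, (1 / (F j) : ℝ) = ∑ i ∈ J, (1 / i : ℝ) := by
    rw [hJ, Finset.sum_image (fun x hx y hy => hinj x hx y hy)]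
  have hcard : J.card = k := by
    rw [hJ, Finset.card_image_of_injOn hinj', Nat.card_Icc]
    omega
  have h0J : 0 ∉ J := by
    rw [hJ]
    simp only [Finset.mem_image, not_exists]
    intro j hj
    have h1 := hF1 j hj.1
    have h2 := hj.2
    omega
  have hsum3 : ∑ i ∈ J, (1 / i : ℝ) ≤ 1 + Real.log k := by
    calc ∑ i ∈ J, (1 / i : ℝ) ≤ ∑ i ∈ Finset.Icc 1 J.card, (1 / i : ℝ) :=
          sum_inv_distinct J.card J rfl h0J
      _ = ∑ i ∈ Finset.Icc 1 k, (1 / i : ℝ) := by rw [hcard]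
      _ ≤ 1 + Real.log k := harmonic_le k
  have hlogk : 0 ≤ Real.log k := Real.log_nonneg hkR
  calc ∑ j ∈ Finset.Icc 1 k, 1 / nd (j * α)
      ≤ 8 * k * ∑ j ∈ Finset.Icc 1 k, (1 / (F j) : ℝ) := hsum1
    _ = 8 * k * ∑ i ∈ J, (1 / i : ℝ) := by rw [hsum2]
    _ ≤ 8 * k * (1 + Real.log k) := by
        apply mul_le_mul_of_nonneg_left hsum3
        positivity

/-- For the golden mean `α = (√5 - 1)/2`, `g x = log (2 - 2 cos (2π x))` and Birkhoff sums
`S k = ∑_{j=1}^{k} g (j α)`, the Birkhoff averages satisfy `S k / k → 0`. -/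
theorem birkhoff_average_tendsto_zero (α : ℝ) (hα : α = (Real.sqrt 5 - 1) / 2)
    (g : ℝ → ℝ) (hg : ∀ x, g x = Real.log (2 - 2 * Real.cos (2 * Real.pi * x)))
    (S : ℕ → ℝ) (hS : ∀ k, S k = ∑ j ∈ Finset.Icc 1 k, g (j * α)) :
    Tendsto (fun k : ℕ => S k / k) atTop (nhds 0) := by
  have hdio : ∀ m : ℕ, 1 ≤ m → 1 / (4 * m) ≤ nd (m * α) := fun m hm => golden_dioph hα m hm
  set z : ℂ := Complex.exp (((2 * π * α : ℝ) : ℂ) * Complex.I) with hzdef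
  have hzj : ∀ j : ℕ, z ^ j = Complex.exp (((2 * π * (j * α) : ℝ) : ℂ) * Complex.I) := by
    intro j
    rw [hzdef, ← Complex.exp_nat_mul]
    congr 1
    push_cast
    ring
  have habsz : ∀ j : ℕ, ‖z ^ j‖ = 1 := by
    intro j
    rw [hzj j]
    exact Complex.norm_exp_ofReal_mul_I _
  have hlow : ∀ j : ℕ, 1 ≤ j → 4 * nd (j * α) ≤ ‖1 - z ^ j‖ := by
    intro j hj
    rw [hzj j]
    exact four_nd_le (j * α)
  have hndpos : ∀ j : ℕ, 1 ≤ j → 0 < nd (j * α) := by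
    intro j hj
    have h2 := hdio j hj
    have hj' : (0:ℝ) < j := by exact_mod_cast hj
    have : (0:ℝ) < 1 / (4 * j) := by positivity
    linarith
  have hne1 : ∀ j : ℕ, 1 ≤ j → z ^ j ≠ 1 := by
    intro j hj heq
    have h1 := hlow j hj
    rw [heq] at h1
    simp only [sub_self, norm_zero] at h1
    linarith [hndpos j hj]
  have hgj : ∀ j : ℕ, g (j * α) = 2 * Real.log (‖1 - z ^ j‖) := by
    intro j
    rw [hg, hzj j]
    exact g_eq_log_abs (j * α)
  -- main estimate
  have MAIN : ∀ k : ℕ, 1 ≤ k → |S k| ≤ 16 * Real.sqrt k * (1 + Real.log k) := by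
    intro k hk
    have hkR : (1:ℝ) ≤ k := by exact_mod_cast hk
    set M : ℕ := Nat.sqrt k with hMdef
    have hM1 : 1 ≤ M := by
      have := Nat.sqrt_pos.2 (show 0 < k by omega)
      omega
    have hMR : (1:ℝ) ≤ M := by exact_mod_cast hM1
    set E : ℕ → ℝ := fun j =>
      Real.log (‖1 - z ^ j‖) + (∑ m ∈ Finset.Icc 1 M, (z ^ j) ^ m / m).re with hE
    have hEbound : ∀ j : ℕ, 1 ≤ j → |E j| ≤ 1 / (2 * (M + 1)) * (1 / nd (j * α)) := by
      intro j hj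
      have h1 := keyF (z ^ j) (habsz j) (hne1 j hj) M
      have h2 := hlow j hj
      have h3 := hndpos j hj
      have hM0 : (0:ℝ) < (M:ℝ) + 1 := by positivity
      calc |E j| ≤ 2 / ((M + 1) * ‖1 - z ^ j‖) := h1
        _ ≤ 2 / ((M + 1) * (4 * nd (j * α))) := by
            apply div_le_div_of_nonneg_left (by norm_num) (by positivity)
            apply mul_le_mul_of_nonneg_left h2 hM0.le
        _ = 1 / (2 * (M + 1)) * (1 / nd (j * α)) := by
            field_simp
            ring
    -- rewrite S k
    set W : ℂ := ∑ m ∈ Finset.Icc 1 M, (∑ j ∈ Finset.Icc 1 k, (z ^ m) ^ j) / m with hW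
    have hSk : S k = 2 * ∑ j ∈ Finset.Icc 1 k, E j - 2 * W.re := by
      rw [hS]
      have h1 : ∀ j ∈ Finset.Icc 1 k, g (j * α)
          = 2 * E j - 2 * (∑ m ∈ Finset.Icc 1 M, (z ^ j) ^ m / m).re := by
        intro j hj
        rw [hgj j, hE]
        simp only
        ring
      rw [Finset.sum_congr rfl h1, Finset.sum_sub_distrib, ← Finset.mul_sum, ← Finset.mul_sum]
      have h2 : ∑ j ∈ Finset.Icc 1 k, (∑ m ∈ Finset.Icc 1 M, (z ^ j) ^ m / m).re = W.re := by
        rw [← Complex.re_sum]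
        congr 1
        rw [Finset.sum_comm]
        apply Finset.sum_congr rfl
        intro m _
        rw [Finset.sum_div]
        apply Finset.sum_congr rfl
        intro j _
        rw [pow_right_comm]
      rw [h2]
    -- bound W
    have hWbound : |W.re| ≤ 4 * M * (1 + Real.log M) := by
      have h1 : ‖W‖ ≤ ∑ m ∈ Finset.Icc 1 M, 1 / (2 * nd (m * α)) := by
        calc ‖W‖ ≤ ∑ m ∈ Finset.Icc 1 M,
              ‖(∑ j ∈ Finset.Icc 1 k, (z ^ m) ^ j) / m‖ :=
            norm_sum_le _ _
          _ ≤ ∑ m ∈ Finset.Icc 1 M, 1 / (2 * nd (m * α)) := by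
            apply Finset.sum_le_sum
            intro m hm
            simp only [Finset.mem_Icc] at hm
            have hm1 : (1:ℝ) ≤ m := by exact_mod_cast hm.1
            have hIcc : Finset.Icc 1 k = Finset.Ioc 0 k := by
              rw [← Finset.Icc_add_one_left_eq_Ioc]; simp
            have hgeo : ‖∑ j ∈ Finset.Icc 1 k, (z ^ m) ^ j‖ ≤ 2 / ‖1 - z ^ m‖ := by
              rw [hIcc]
              exact geom_Ioc (z ^ m) (habsz m) (hne1 m hm.1) 0 k
            have hnd := hndpos m hm.1
            have h2 := hlow m hm.1
            rw [norm_div, Complex.norm_natCast]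
            calc ‖∑ j ∈ Finset.Icc 1 k, (z ^ m) ^ j‖ / m
                ≤ (2 / ‖1 - z ^ m‖) / m := by
                  apply div_le_div_of_nonneg_right _ (by positivity)
                  exact hgeo
              _ ≤ (2 / (4 * nd (m * α))) / m := by
                  apply div_le_div_of_nonneg_right _ (by positivity)
                  apply div_le_div_of_nonneg_left (by norm_num) (by positivity) h2
              _ ≤ (2 / (4 * nd (m * α))) / 1 := by
                  apply div_le_div_of_nonneg_left _ one_pos hm1
                  positivity
              _ = 1 / (2 * nd (m * α)) := by
                  rw [div_one]
                  field_simp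
                  ring
      have h2 : ∑ m ∈ Finset.Icc 1 M, 1 / (2 * nd (m * α))
          ≤ 4 * M * (1 + Real.log M) := by
        have := recip_sum hdio hM1
        have heq : ∑ m ∈ Finset.Icc 1 M, 1 / (2 * nd (m * α))
            = (1/2) * ∑ m ∈ Finset.Icc 1 M, 1 / nd (m * α) := by
          rw [Finset.mul_sum]
          apply Finset.sum_congr rfl
          intro m _
          rw [one_div, mul_inv, ← one_div]
          ring
        rw [heq]
        linarith
      calc |W.re| ≤ ‖W‖ := Complex.abs_re_le_norm W
        _ ≤ ∑ m ∈ Finset.Icc 1 M, 1 / (2 * nd (m * α)) := h1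
        _ ≤ 4 * M * (1 + Real.log M) := h2
    -- bound sum of E
    have hEsum : |∑ j ∈ Finset.Icc 1 k, E j| ≤ 4 * k * (1 + Real.log k) / (M + 1) := by
      calc |∑ j ∈ Finset.Icc 1 k, E j| ≤ ∑ j ∈ Finset.Icc 1 k, |E j| :=
            Finset.abs_sum_le_sum_abs _ _
        _ ≤ ∑ j ∈ Finset.Icc 1 k, 1 / (2 * (M + 1)) * (1 / nd (j * α)) := by
            apply Finset.sum_le_sum
            intro j hj
            simp only [Finset.mem_Icc] at hj
            exact hEbound j hj.1
        _ = 1 / (2 * (M + 1)) * ∑ j ∈ Finset.Icc 1 k, 1 / nd (j * α) := by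
            rw [Finset.mul_sum]
        _ ≤ 1 / (2 * (M + 1)) * (8 * k * (1 + Real.log k)) := by
            apply mul_le_mul_of_nonneg_left (recip_sum hdio hk)
            positivity
        _ = 4 * k * (1 + Real.log k) / (M + 1) := by
            field_simp
            ring
    -- put together
    have hlogM : Real.log M ≤ Real.log k := by
      apply Real.log_le_log (by positivity)
      exact_mod_cast Nat.sqrt_le_self k
    have hMsqrt : (M:ℝ) ≤ Real.sqrt k := Real.nat_sqrt_le_real_sqrt
    have hsqrtM : Real.sqrt k ≤ (M:ℝ) + 1 := by
      have := Real.real_sqrt_le_nat_sqrt_succ (a := k)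
      push_cast at this ⊢
      convert this using 2
    have hsqrtpos : 0 < Real.sqrt k := Real.sqrt_pos.2 (by positivity)
    have hsqk : Real.sqrt k * Real.sqrt k = k := Real.mul_self_sqrt (by positivity)
    have hlogk0 : 0 ≤ Real.log k := Real.log_nonneg hkR
    have hterm1 : 8 * (M:ℝ) * (1 + Real.log M) ≤ 8 * Real.sqrt k * (1 + Real.log k) := by
      apply mul_le_mul
      · linarith
      · linarith
      · have : 0 ≤ Real.log M := Real.log_nonneg hMR
        linarith
      · positivity
    have hterm2 : 8 * (k:ℝ) * (1 + Real.log k) / (M + 1)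
        ≤ 8 * Real.sqrt k * (1 + Real.log k) := by
      rw [div_le_iff₀ (by positivity : (0:ℝ) < (M:ℝ) + 1)]
      have h1 : 8 * Real.sqrt k * (1 + Real.log k) * (M + 1)
          ≥ 8 * Real.sqrt k * (1 + Real.log k) * Real.sqrt k := by
        apply mul_le_mul_of_nonneg_left hsqrtM
        positivity
      have h0 : 8 * (k:ℝ) * (1 + Real.log k)
          = 8 * Real.sqrt k * (1 + Real.log k) * Real.sqrt k := by
        linear_combination 8 * (1 + Real.log k) * hsqk.symm
      linarith [h0, h1]
    calc |S k| = |2 * ∑ j ∈ Finset.Icc 1 k, E j - 2 * W.re| := by rw [hSk]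
      _ ≤ 2 * |∑ j ∈ Finset.Icc 1 k, E j| + 2 * |W.re| := by
          calc |2 * ∑ j ∈ Finset.Icc 1 k, E j - 2 * W.re|
              ≤ |2 * ∑ j ∈ Finset.Icc 1 k, E j| + |2 * W.re| := abs_sub _ _
            _ = 2 * |∑ j ∈ Finset.Icc 1 k, E j| + 2 * |W.re| := by
                rw [abs_mul, abs_mul]
                norm_num
      _ ≤ 2 * (4 * k * (1 + Real.log k) / (M + 1)) + 2 * (4 * M * (1 + Real.log M)) := by
          apply add_le_add
          · exact mul_le_mul_of_nonneg_left hEsum (by norm_num)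
          · exact mul_le_mul_of_nonneg_left hWbound (by norm_num)
      _ = 8 * (k:ℝ) * (1 + Real.log k) / (M + 1) + 8 * (M:ℝ) * (1 + Real.log M) := by
          ring
      _ ≤ 8 * Real.sqrt k * (1 + Real.log k) + 8 * Real.sqrt k * (1 + Real.log k) := by
          exact add_le_add hterm2 hterm1
      _ = 16 * Real.sqrt k * (1 + Real.log k) := by ring
  -- conclude the limit
  have hfinal : ∀ k : ℕ, 1 ≤ k → |S k / k| ≤ 80 / Real.sqrt (Real.sqrt k) := by
    intro k hk
    have hkR : (1:ℝ) ≤ k := by exact_mod_cast hk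
    have hkpos : (0:ℝ) < k := by linarith
    set u : ℝ := Real.sqrt (Real.sqrt k) with hu
    have hu0 : 0 < u := Real.sqrt_pos.2 (Real.sqrt_pos.2 hkpos)
    have hu1 : 1 ≤ u := by
      rw [hu]
      rw [show (1:ℝ) = Real.sqrt (Real.sqrt 1) by simp]
      apply Real.sqrt_le_sqrt
      apply Real.sqrt_le_sqrt
      exact hkR
    have hu2 : u * u = Real.sqrt k := Real.mul_self_sqrt (Real.sqrt_nonneg _)
    have hu4 : (k:ℝ) = u ^ 4 := by
      have h1 : Real.sqrt k * Real.sqrt k = k := Real.mul_self_sqrt hkpos.le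
      nlinarith [hu2, h1]
    have hlogu : Real.log k ≤ 4 * u := by
      have h1 : Real.log k = 4 * Real.log u := by
        rw [hu4, show u ^ 4 = u^(4:ℕ) by norm_num, Real.log_pow]
        push_cast
        ring
      have h2 : Real.log u ≤ u - 1 := Real.log_le_sub_one_of_pos hu0
      linarith
    have hL5 : 0 ≤ 5 * u - (1 + Real.log k) := by linarith
    have hSb := MAIN k hk
    rw [abs_div, abs_of_pos hkpos]
    rw [div_le_div_iff₀ hkpos hu0]
    have hsqrtk : Real.sqrt k = u * u := hu2.symm
    calc |S k| * u ≤ 16 * Real.sqrt k * (1 + Real.log k) * u := by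
          apply mul_le_mul_of_nonneg_right hSb hu0.le
      _ = 16 * (u * u) * (1 + Real.log k) * u := by rw [hsqrtk]
      _ ≤ 80 * k := by
          nlinarith [hu4, mul_nonneg (mul_nonneg (mul_nonneg hu0.le hu0.le) hu0.le) hL5]
  have hsra : Tendsto Real.sqrt atTop atTop := by
    rw [tendsto_atTop_atTop]
    intro b
    refine ⟨(max b 0) ^ 2, fun a ha => ?_⟩
    calc b ≤ max b 0 := le_max_left _ _
      _ = Real.sqrt ((max b 0) ^ 2) := (Real.sqrt_sq (le_max_right _ _)).symm
      _ ≤ Real.sqrt a := Real.sqrt_le_sqrt ha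
  have hdiv : Tendsto (fun k : ℕ => 80 / Real.sqrt (Real.sqrt k)) atTop (nhds 0) :=
    tendsto_const_nhds.div_atTop (hsra.comp (hsra.comp tendsto_natCast_atTop_atTop))
  apply squeeze_zero_norm' _ hdiv
  filter_upwards [eventually_ge_atTop 1] with k hk
  rw [Real.norm_eq_abs]
  exact hfinal k hk
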